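/- arXiv:2201.04121 — 12 statements merged into one kernel-verified Lean document; each statement's English description precedes it below -/
import Mathlib

section
/- For d ≥ 1, if (p, q, r) ∈ ℝ × ℝ × ℝ^d satisfies p < 0, r_i > 0 for all i, and q > p·∑_i log(-r_i/p) + p·d, then ω̄ := d·ω((1/d)(1 + d - q/p + ∑_i log(-r_i/p)) - log d) > 1, where ω is the Wright omega function on the reals, i.e., the inverse of x ↦ x + log x on (0, ∞). -/
theorem stmt_0 (d : ℕ) (hd : 1 ≤ d) (ω : ℝ → ℝ)
    (hωpos : ∀ β : ℝ, 0 < ω β)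
    (hωeq : ∀ β : ℝ, ω β + Real.log (ω β) = β)
    (p q : ℝ) (r : Fin d → ℝ)
    (hp : p < 0) (hr : ∀ i, 0 < r i)
    (hq : p * ∑ i, Real.log (-(r i) / p) + p * d < q) :
    1 < (d : ℝ) * ω ((1 / d) * (1 + d - q / p + ∑ i, Real.log (-(r i) / p)) - Real.log d) := by
  have hd0 : (0:ℝ) < d := by exact_mod_cast hd
  set S : ℝ := ∑ i, Real.log (-(r i) / p) with hS
  set β : ℝ := (1 / d) * (1 + d - q / p + S) - Real.log d with hβdef
  -- q/p < S + d
  have hqp : q / p < S + d := by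
    rw [div_lt_iff_of_neg hp]
    nlinarith [hq]
  have hβ : 1 / (d:ℝ) - Real.log d < β := by
    rw [hβdef]
    have h1 : (1:ℝ) < 1 + d - q / p + S := by linarith
    have : 1 / (d:ℝ) * 1 < 1 / d * (1 + d - q / p + S) := by
      apply mul_lt_mul_of_pos_left h1 (by positivity)
    linarith
  set w : ℝ := ω β with hw
  have hwpos : 0 < w := hωpos β
  have hweq : w + Real.log w = β := hωeq β
  clear_value w β
  by_contra h
  push_neg at h
  have hwle : w ≤ 1 / (d:ℝ) := by
    rw [le_div_iff₀ hd0]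
    linarith [mul_comm (d:ℝ) w]
  have hlog : Real.log w ≤ Real.log (1 / d) := Real.log_le_log hwpos hwle
  rw [Real.log_div (by norm_num) (ne_of_gt hd0), Real.log_one] at hlog
  linarith
end

section
/- Let d ≥ 1, α ∈ ℝ^d with α_i > 0 and ∑_i α_i = 1, and let φ(w) = ∏_i w_i^{α_i}. If p < 0, r ∈ ℝ_{++}^d and -p < φ(r/α) (i.e., (p,r) is interior to the dual hypograph power cone), then the function h(y) = ∑_i α_i log(y - p α_i) - log(φ(r)), defined for y > max_i p α_i, is strictly increasing, strictly concave, and has a unique root ŷ, and ŷ > 0. -/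
open Real Set Finset

theorem stmt_1 (d : ℕ) (hd : 1 ≤ d) (α : Fin d → ℝ)
    (hα : ∀ i, 0 < α i) (hαsum : ∑ i, α i = 1)
    (p : ℝ) (r : Fin d → ℝ) (hp : p < 0) (hr : ∀ i, 0 < r i)
    (hdual : -p < ∏ i, (r i / α i) ^ (α i)) :
    StrictMonoOn (fun y => ∑ i, α i * Real.log (y - p * α i) - Real.log (∏ i, (r i) ^ (α i)))
      {y : ℝ | ∀ i, p * α i < y} ∧
    StrictConcaveOn ℝ {y : ℝ | ∀ i, p * α i < y}
      (fun y => ∑ i, α i * Real.log (y - p * α i) - Real.log (∏ i, (r i) ^ (α i))) ∧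
    ∃ yhat : ℝ, (∀ i, p * α i < yhat) ∧ 0 < yhat ∧
      (∑ i, α i * Real.log (yhat - p * α i) - Real.log (∏ i, (r i) ^ (α i)) = 0) ∧
      ∀ y : ℝ, (∀ i, p * α i < y) →
        (∑ i, α i * Real.log (y - p * α i) - Real.log (∏ i, (r i) ^ (α i)) = 0) → y = yhat := by
  have hdpos : 0 < d := hd
  haveI : Nonempty (Fin d) := Fin.pos_iff_nonempty.mp hdpos
  set C : ℝ := Real.log (∏ i, (r i) ^ (α i)) with hC
  set f : ℝ → ℝ := fun y => ∑ i, α i * Real.log (y - p * α i) - C with hf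
  set S : Set ℝ := {y : ℝ | ∀ i, p * α i < y} with hS
  have hneg : ∀ i, p * α i < 0 := fun i => mul_neg_of_neg_of_pos hp (hα i)
  have hposS : ∀ {y : ℝ}, y ∈ S → ∀ i, 0 < y - p * α i := fun hy i => sub_pos.mpr (hy i)
  -- strict monotonicity
  have hmono : StrictMonoOn f S := by
    intro x hx y hy hxy
    have : ∑ i, α i * Real.log (x - p * α i) < ∑ i, α i * Real.log (y - p * α i) := by
      apply Finset.sum_lt_sum_of_nonempty Finset.univ_nonempty
      intro i _
      exact mul_lt_mul_of_pos_left
        (Real.log_lt_log (hposS hx i) (by linarith)) (hα i)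
    simpa [hf] using sub_lt_sub_right this C
  -- convexity of S
  have hSconv : Convex ℝ S := by
    have : S = ⋂ i, Set.Ioi (p * α i) := by
      ext y; simp [hS, Set.mem_iInter]
    rw [this]
    exact convex_iInter fun i => convex_Ioi _
  -- strict concavity
  have hconc : StrictConcaveOn ℝ S f := by
    refine ⟨hSconv, ?_⟩
    intro x hx y hy hxy a b ha hb hab
    have key : ∀ i : Fin d,
        a * (α i * Real.log (x - p * α i)) + b * (α i * Real.log (y - p * α i))
          < α i * Real.log (a * x + b * y - p * α i) := by
      intro i
      have hlog := strictConcaveOn_log_Ioi.2 (Set.mem_Ioi.mpr (hposS hx i))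
        (Set.mem_Ioi.mpr (hposS hy i)) (by intro h; apply hxy; linarith [sub_left_injective.eq_iff.mp h]) ha hb hab
      have harg : a * (x - p * α i) + b * (y - p * α i) = a * x + b * y - p * α i := by
        have : a * (p * α i) + b * (p * α i) = p * α i := by
          rw [← add_mul, hab, one_mul]
        ring_nf
        nlinarith [hab]
      have hlog' : a * Real.log (x - p * α i) + b * Real.log (y - p * α i)
          < Real.log (a * x + b * y - p * α i) := by
        rw [← harg]; simpa [smul_eq_mul] using hlog
      calc a * (α i * Real.log (x - p * α i)) + b * (α i * Real.log (y - p * α i))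
          = α i * (a * Real.log (x - p * α i) + b * Real.log (y - p * α i)) := by ring
        _ < α i * Real.log (a * x + b * y - p * α i) :=
            mul_lt_mul_of_pos_left hlog' (hα i)
    have hsum : ∑ i, (a * (α i * Real.log (x - p * α i)) + b * (α i * Real.log (y - p * α i)))
        < ∑ i, α i * Real.log (a * x + b * y - p * α i) :=
      Finset.sum_lt_sum_of_nonempty Finset.univ_nonempty (fun i _ => key i)
    have hC' : a * C + b * C = C := by rw [← add_mul, hab, one_mul]
    have e1 : ∑ i, (a * (α i * Real.log (x - p * α i)) + b * (α i * Real.log (y - p * α i)))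
        = a * ∑ i, α i * Real.log (x - p * α i) + b * ∑ i, α i * Real.log (y - p * α i) := by
      rw [Finset.sum_add_distrib, ← Finset.mul_sum, ← Finset.mul_sum]
    have : a • f x + b • f y < f (a • x + b • y) := by
      simp only [hf, smul_eq_mul]
      have e2 : a * (∑ i, α i * Real.log (x - p * α i) - C)
            + b * (∑ i, α i * Real.log (y - p * α i) - C)
          = (a * ∑ i, α i * Real.log (x - p * α i)
              + b * ∑ i, α i * Real.log (y - p * α i)) - (a * C + b * C) := by ring
      rw [e2, hC']
      rw [e1] at hsum
      linarith
    exact this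
  refine ⟨hmono, hconc, ?_⟩
  -- f 0 < 0
  have hC_eq : C = ∑ i, α i * Real.log (r i) := by
    rw [hC, Real.log_prod]
    · exact Finset.sum_congr rfl fun i _ => Real.log_rpow (hr i) (α i)
    · intro i _
      exact ne_of_gt (Real.rpow_pos_of_pos (hr i) (α i))
  have hlogdual : Real.log (∏ i, (r i / α i) ^ (α i))
      = ∑ i, α i * (Real.log (r i) - Real.log (α i)) := by
    rw [Real.log_prod]
    · refine Finset.sum_congr rfl fun i _ => ?_
      rw [Real.log_rpow (div_pos (hr i) (hα i)), Real.log_div (ne_of_gt (hr i)) (ne_of_gt (hα i))]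
    · intro i _
      exact ne_of_gt (Real.rpow_pos_of_pos (div_pos (hr i) (hα i)) (α i))
  have hf0 : f 0 < 0 := by
    have h1 : f 0 = Real.log (-p) + ∑ i, α i * Real.log (α i) - C := by
      simp only [hf, zero_sub]
      have : ∀ i : Fin d, α i * Real.log (-(p * α i)) = α i * Real.log (-p) + α i * Real.log (α i) := by
        intro i
        rw [neg_mul_eq_neg_mul, Real.log_mul (by linarith : -p ≠ 0) (ne_of_gt (hα i))]
        ring
      rw [Finset.sum_congr rfl fun i _ => this i, Finset.sum_add_distrib,
        ← Finset.sum_mul, hαsum, one_mul]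
    have h2 : Real.log (-p) < Real.log (∏ i, (r i / α i) ^ (α i)) :=
      Real.log_lt_log (by linarith) hdual
    rw [hlogdual] at h2
    have : ∑ i, α i * (Real.log (r i) - Real.log (α i))
        = ∑ i, α i * Real.log (r i) - ∑ i, α i * Real.log (α i) := by
      rw [← Finset.sum_sub_distrib]
      exact Finset.sum_congr rfl fun i _ => by ring
    rw [this, ← hC_eq] at h2
    linarith [h1]
  -- f b > 0 for b = exp (C + 1)
  set b : ℝ := Real.exp (C + 1) with hb
  have hbpos : 0 < b := Real.exp_pos _
  have hfb : 0 < f b := by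
    have hlogb : Real.log b = C + 1 := Real.log_exp _
    have : ∑ i, α i * Real.log b ≤ ∑ i, α i * Real.log (b - p * α i) := by
      apply Finset.sum_le_sum
      intro i _
      apply mul_le_mul_of_nonneg_left _ (le_of_lt (hα i))
      exact Real.log_le_log hbpos (by linarith [hneg i])
    have hsum : ∑ i, α i * Real.log b = C + 1 := by
      rw [← Finset.sum_mul, hαsum, one_mul, hlogb]
    simp only [hf]
    linarith
  -- continuity on Icc 0 b
  have hcont : ContinuousOn f (Set.Icc 0 b) := by
    apply ContinuousOn.sub _ continuousOn_const
    apply continuousOn_finset_sum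
    intro i _
    apply ContinuousOn.mul continuousOn_const
    apply ContinuousOn.log
    · exact (continuousOn_id.sub continuousOn_const)
    · intro y hy
      have : 0 < y - p * α i := by
        have := hy.1
        have := hneg i
        linarith
      linarith
  have hmemS : ∀ y ∈ Set.Icc (0:ℝ) b, y ∈ S := by
    intro y hy i
    have := hy.1
    linarith [hneg i]
  obtain ⟨yhat, hyhat, heq⟩ := intermediate_value_Icc (le_of_lt hbpos) hcont
    (Set.mem_Icc.mpr ⟨le_of_lt hf0, le_of_lt hfb⟩)
  have hyS : yhat ∈ S := hmemS yhat hyhat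
  have hypos : 0 < yhat := by
    rcases lt_or_eq_of_le hyhat.1 with h | h
    · exact h
    · exfalso; rw [← h] at heq; rw [heq] at hf0; exact lt_irrefl 0 hf0
  refine ⟨yhat, hyS, hypos, heq, ?_⟩
  intro y hyS' hy0
  have hfy : f y = f yhat := by
    have : f y = 0 := hy0
    rw [this, heq]
  exact hmono.injOn hyS' hyS hfy
end

section
/- Let d ≥ 1, p ∈ ℝ, r ∈ ℝ^d with p > ∑_i |r_i| (interior of the epigraph of the ℓ1 norm), r ≠ 0. Then h(y) = p y + ∑_i √(1 + r_i² y²) + 1 is strictly convex on ℝ, strictly increasing on (-∞, 0], satisfies h'(y) ≥ p - ∑_i |r_i| > 0 for y ≤ 0, and has a unique root ŷ on (-∞, 0]; moreover ŷ ≤ max{-(p - ∑_i |r_i|)^{-1}, -(d+1)/p}. -/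
lemma aux_deriv1 (c y : ℝ) (hc : 0 ≤ c) :
    HasDerivAt (fun y => Real.sqrt (1 + c * y ^ 2)) (c * y / Real.sqrt (1 + c * y ^ 2)) y := by
  have hu : (0:ℝ) < 1 + c * y ^ 2 := by positivity
  have h1 : HasDerivAt (fun y : ℝ => 1 + c * y ^ 2) (c * (2 * y)) y := by
    have := ((hasDerivAt_pow 2 y).const_mul c).const_add 1
    simpa using this
  have h2 := (Real.hasDerivAt_sqrt hu.ne').comp y h1
  have hs : Real.sqrt (1 + c * y ^ 2) ≠ 0 := (Real.sqrt_pos.mpr hu).ne'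
  refine h2.congr_deriv ?_
  field_simp

lemma aux_deriv2 (c y : ℝ) (hc : 0 ≤ c) :
    HasDerivAt (fun y => c * y / Real.sqrt (1 + c * y ^ 2))
      (c / ((1 + c * y ^ 2) * Real.sqrt (1 + c * y ^ 2))) y := by
  have hu : (0:ℝ) < 1 + c * y ^ 2 := by positivity
  have hs0 : 0 < Real.sqrt (1 + c * y ^ 2) := Real.sqrt_pos.mpr hu
  have hf : HasDerivAt (fun y : ℝ => c * y) c y := by
    simpa using (hasDerivAt_id y).const_mul c
  have h2 := hf.div (aux_deriv1 c y hc) hs0.ne'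
  have hsq : Real.sqrt (1 + c * y ^ 2) ^ 2 = 1 + c * y ^ 2 := Real.sq_sqrt hu.le
  refine h2.congr_deriv ?_
  field_simp
  linear_combination (c * (1 + c * y ^ 2) - c) * hsq

lemma aux_key (c y : ℝ) (hy : y ≤ 0) :
    -|c| ≤ c ^ 2 * y / Real.sqrt (1 + c ^ 2 * y ^ 2) := by
  have hu : (0:ℝ) < 1 + c ^ 2 * y ^ 2 := by positivity
  have hs0 : 0 < Real.sqrt (1 + c ^ 2 * y ^ 2) := Real.sqrt_pos.mpr hu
  have h1 : |c| * |y| ≤ Real.sqrt (1 + c ^ 2 * y ^ 2) := by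
    rw [← abs_mul, ← Real.sqrt_sq_eq_abs]
    apply Real.sqrt_le_sqrt
    nlinarith
  rw [le_div_iff₀ hs0]
  have hay : |y| = -y := abs_of_nonpos hy
  nlinarith [abs_nonneg c, abs_nonneg y, sq_abs c]

lemma aux_upper (c y : ℝ) (hy : y ≤ 0) :
    Real.sqrt (1 + c ^ 2 * y ^ 2) ≤ 1 - |c| * y := by
  have h0 : 0 ≤ 1 - |c| * y := by nlinarith [abs_nonneg c]
  rw [show (1 : ℝ) - |c| * y = Real.sqrt ((1 - |c| * y) ^ 2) from (Real.sqrt_sq h0).symm]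
  apply Real.sqrt_le_sqrt
  nlinarith [abs_nonneg c, sq_abs c, sq_abs y]

lemma aux_lower (c y : ℝ) : 1 ≤ Real.sqrt (1 + c ^ 2 * y ^ 2) := by
  nlinarith [Real.sq_sqrt (show (0:ℝ) ≤ 1 + c ^ 2 * y ^ 2 by positivity),
    Real.sqrt_nonneg (1 + c ^ 2 * y ^ 2), sq_nonneg (c * y)]

theorem stmt_4 (d : ℕ) (hd : 1 ≤ d) (p : ℝ) (r : Fin d → ℝ)
    (hp : ∑ i, |r i| < p) (hr : r ≠ 0) :
    let h : ℝ → ℝ := fun y => p * y + ∑ i, Real.sqrt (1 + (r i) ^ 2 * y ^ 2) + 1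
    StrictConvexOn ℝ Set.univ h ∧
    StrictMonoOn h (Set.Iic 0) ∧
    (∀ y ≤ (0 : ℝ),
      p - ∑ i, |r i| ≤ p + y * ∑ i, (r i) ^ 2 / Real.sqrt (1 + (r i) ^ 2 * y ^ 2)) ∧
    (0 < p - ∑ i, |r i|) ∧
    ∃ yhat : ℝ, (yhat ≤ 0 ∧ h yhat = 0 ∧
        yhat ≤ max (-(p - ∑ i, |r i|)⁻¹) (-(d + 1) / p)) ∧
      ∀ z ≤ (0 : ℝ), h z = 0 → z = yhat := by
  intro h
  set S : ℝ := ∑ i, |r i| with hSdef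
  have hS0 : 0 ≤ S := Finset.sum_nonneg fun i _ => abs_nonneg _
  have hpS : 0 < p - S := by linarith
  have hp0 : 0 < p := lt_of_le_of_lt hS0 hp
  obtain ⟨i0, hi0⟩ : ∃ i, r i ≠ 0 := by
    by_contra hc; push_neg at hc; exact hr (funext hc)
  -- continuity
  have hcont : Continuous h := by
    apply Continuous.add
    apply Continuous.add (by fun_prop)
    exact continuous_finset_sum _ fun i _ => (by fun_prop : Continuous fun y : ℝ => 1 + (r i) ^ 2 * y ^ 2).sqrt
    exact continuous_const
  -- first derivative
  have hd1 : ∀ y : ℝ, HasDerivAt h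
      (p + ∑ i, (r i) ^ 2 * y / Real.sqrt (1 + (r i) ^ 2 * y ^ 2)) y := by
    intro y
    have hsum : HasDerivAt (fun y => ∑ i, Real.sqrt (1 + (r i) ^ 2 * y ^ 2))
        (∑ i, (r i) ^ 2 * y / Real.sqrt (1 + (r i) ^ 2 * y ^ 2)) y :=
      HasDerivAt.fun_sum fun i _ => aux_deriv1 _ y (sq_nonneg _)
    have hpy : HasDerivAt (fun y : ℝ => p * y) p y := by
      simpa using (hasDerivAt_id y).const_mul p
    simpa [h] using (hpy.add hsum).add_const 1
  have hderiv : deriv h = fun y => p + ∑ i, (r i) ^ 2 * y / Real.sqrt (1 + (r i) ^ 2 * y ^ 2) :=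
    funext fun y => (hd1 y).deriv
  -- second derivative
  have hd2 : ∀ y : ℝ, HasDerivAt (fun y => p + ∑ i, (r i) ^ 2 * y / Real.sqrt (1 + (r i) ^ 2 * y ^ 2))
      (∑ i, (r i) ^ 2 / ((1 + (r i) ^ 2 * y ^ 2) * Real.sqrt (1 + (r i) ^ 2 * y ^ 2))) y :=
    fun y => (HasDerivAt.fun_sum fun i _ => aux_deriv2 _ y (sq_nonneg _)).const_add p
  have h2pos : ∀ y : ℝ,
      0 < ∑ i, (r i) ^ 2 / ((1 + (r i) ^ 2 * y ^ 2) * Real.sqrt (1 + (r i) ^ 2 * y ^ 2)) := by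
    intro y
    apply Finset.sum_pos' (fun i _ => by positivity)
    refine ⟨i0, Finset.mem_univ _, ?_⟩
    have h0 : 0 < (r i0) ^ 2 := lt_of_le_of_ne (sq_nonneg _) (Ne.symm (pow_ne_zero 2 hi0))
    have h1 : (0:ℝ) < 1 + (r i0) ^ 2 * y ^ 2 := by positivity
    exact div_pos h0 (mul_pos h1 (Real.sqrt_pos.mpr h1))
  -- strict convexity
  have hconv : StrictConvexOn ℝ Set.univ h := by
    apply strictConvexOn_of_deriv2_pos convex_univ hcont.continuousOn
    intro y _
    have : deriv (deriv h) y =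
        ∑ i, (r i) ^ 2 / ((1 + (r i) ^ 2 * y ^ 2) * Real.sqrt (1 + (r i) ^ 2 * y ^ 2)) := by
      rw [hderiv]; exact (hd2 y).deriv
    simp only [Function.iterate_succ, Function.iterate_zero, Function.comp_apply, id_eq]
    rw [this]
    exact h2pos y
  -- key bound on first derivative
  have hdbound : ∀ y ≤ (0:ℝ),
      p - S ≤ p + ∑ i, (r i) ^ 2 * y / Real.sqrt (1 + (r i) ^ 2 * y ^ 2) := by
    intro y hy
    have : ∑ i, (-|r i|) ≤ ∑ i, (r i) ^ 2 * y / Real.sqrt (1 + (r i) ^ 2 * y ^ 2) :=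
      Finset.sum_le_sum fun i _ => aux_key (r i) y hy
    rw [Finset.sum_neg_distrib] at this
    linarith
  -- strict monotonicity
  have hmono : StrictMonoOn h (Set.Iic 0) := by
    apply strictMonoOn_of_deriv_pos (convex_Iic 0) hcont.continuousOn
    intro y hy
    rw [interior_Iic] at hy
    rw [hderiv]
    have := hdbound y hy.le
    linarith
  refine ⟨hconv, hmono, ?_, hpS, ?_⟩
  · intro y hy
    have := hdbound y hy
    have hre : y * ∑ i, (r i) ^ 2 / Real.sqrt (1 + (r i) ^ 2 * y ^ 2)
        = ∑ i, (r i) ^ 2 * y / Real.sqrt (1 + (r i) ^ 2 * y ^ 2) := by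
      rw [Finset.mul_sum]
      exact Finset.sum_congr rfl fun i _ => by ring
    rw [hre]
    exact this
  -- existence and uniqueness of root
  · set M : ℝ := max (-(p - S)⁻¹) (-(d + 1) / p) with hM
    have hdpos : (0:ℝ) < (d:ℝ) + 1 := by positivity
    have hM0 : M ≤ 0 := by
      apply max_le
      · simp [inv_nonneg.mpr hpS.le]
      · apply div_nonpos_of_nonpos_of_nonneg <;> [linarith; exact hp0.le]
    set y₁ : ℝ := -((d:ℝ) + 1) / (p - S) with hy₁
    have hy₁0 : y₁ ≤ 0 := by
      apply div_nonpos_of_nonpos_of_nonneg <;> [linarith; exact hpS.le]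
    have hy₁M : y₁ ≤ M := by
      have : -((d:ℝ) + 1) / (p - S) ≤ -((d:ℝ) + 1) / p := by
        rw [neg_div, neg_div, neg_le_neg_iff]
        gcongr
        linarith
      exact le_trans this (le_max_right _ _)
    -- h y₁ ≤ 0
    have hhy₁ : h y₁ ≤ 0 := by
      have hb : ∑ i, Real.sqrt (1 + (r i) ^ 2 * y₁ ^ 2) ≤ ∑ i, (1 - |r i| * y₁) :=
        Finset.sum_le_sum fun i _ => aux_upper (r i) y₁ hy₁0
      have hbs : ∑ i, ((1:ℝ) - |r i| * y₁) = (d:ℝ) - S * y₁ := by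
        rw [Finset.sum_sub_distrib, ← Finset.sum_mul]
        simp [hSdef]
      have hval : p * y₁ + ((d:ℝ) - S * y₁) + 1 = 0 := by
        rw [hy₁]
        field_simp
        ring
      show p * y₁ + ∑ i, Real.sqrt (1 + (r i) ^ 2 * y₁ ^ 2) + 1 ≤ 0
      rw [hbs] at hb
      linarith
    -- h M ≥ 0
    have hhM : 0 ≤ h M := by
      have hb : ∑ _i : Fin d, (1:ℝ) ≤ ∑ i, Real.sqrt (1 + (r i) ^ 2 * M ^ 2) :=
        Finset.sum_le_sum fun i _ => aux_lower (r i) M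
      have hbs : ∑ _i : Fin d, (1:ℝ) = (d:ℝ) := by simp
      have hMge : -((d:ℝ) + 1) / p ≤ M := le_max_right _ _
      have hpM : -((d:ℝ) + 1) ≤ p * M := by
        rw [div_le_iff₀ hp0] at hMge
        linarith [hMge]
      show 0 ≤ p * M + ∑ i, Real.sqrt (1 + (r i) ^ 2 * M ^ 2) + 1
      rw [hbs] at hb
      linarith
    obtain ⟨yhat, hmem, hroot⟩ := intermediate_value_Icc hy₁M hcont.continuousOn
      (Set.mem_Icc.mpr ⟨hhy₁, hhM⟩)
    have hyhat0 : yhat ≤ 0 := le_trans hmem.2 hM0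
    refine ⟨yhat, ⟨hyhat0, hroot, hmem.2⟩, ?_⟩
    intro z hz hzr
    exact hmono.injOn hz hyhat0 (by rw [hzr, hroot])
end

section
/- Let d ≥ 1, p > ∑_i |r_i|, r ∈ ℝ^d, and let ŷ < 0 satisfy p ŷ + ∑_i √(1 + r_i² ŷ²) + 1 = 0. Define g*_p = ŷ and g*_{r_i} = (√(1 + ŷ² r_i²) - 1)/r_i if r_i ≠ 0, and 0 otherwise. Then the point (u, w) := (-g*_p, -g*_r) lies in the interior of the infinity norm cone (u > max_i |w_i|), and the negative gradient of the barrier f(u,w) = -∑_i log(u² - w_i²) + (d-1) log u at (u,w) equals (p, r). -/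
theorem stmt_5 (d : ℕ) (hd : 1 ≤ d) (p : ℝ) (r : Fin d → ℝ)
    (hp : ∑ i, |r i| < p) (yhat : ℝ) (hy : yhat < 0)
    (hroot : p * yhat + ∑ i, Real.sqrt (1 + (r i) ^ 2 * yhat ^ 2) + 1 = 0) :
    let gr : Fin d → ℝ := fun i =>
      if r i = 0 then 0 else (Real.sqrt (1 + yhat ^ 2 * (r i) ^ 2) - 1) / r i
    let u := -yhat
    let w : Fin d → ℝ := fun i => -gr i
    (∀ i, |w i| < u) ∧
    (-(((d : ℝ) - 1) / u - ∑ i, 2 * u / (u ^ 2 - (w i) ^ 2)) = p) ∧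
    (∀ i, -(2 * w i / (u ^ 2 - (w i) ^ 2)) = r i) := by
  intro gr u w
  have hyne : yhat ≠ 0 := ne_of_lt hy
  set s : Fin d → ℝ := fun i => Real.sqrt (1 + yhat ^ 2 * (r i) ^ 2) with hsdef
  have hs_sq : ∀ i, s i ^ 2 = 1 + yhat ^ 2 * (r i) ^ 2 := fun i =>
    Real.sq_sqrt (by positivity)
  have hs_nonneg : ∀ i, 0 ≤ s i := fun i => Real.sqrt_nonneg _
  have hs1 : ∀ i, 1 ≤ s i := fun i => by nlinarith [hs_sq i, hs_nonneg i, sq_nonneg (yhat * r i)]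
  have hsp : ∀ i, 0 < s i + 1 := fun i => by linarith [hs1 i]
  have hspne : ∀ i, s i + 1 ≠ 0 := fun i => ne_of_gt (hsp i)
  have hw : ∀ i, w i = -(yhat ^ 2 * r i) / (s i + 1) := by
    intro i
    show -gr i = _
    by_cases h : r i = 0
    · simp [gr, h]
    · simp only [gr, if_neg h]
      have hsi : Real.sqrt (1 + yhat ^ 2 * r i ^ 2) = s i := rfl
      rw [hsi, neg_div, neg_inj, div_eq_div_iff h (hspne i)]
      linear_combination hs_sq i
  have hdiff : ∀ i, u ^ 2 - w i ^ 2 = 2 * yhat ^ 2 / (s i + 1) := by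
    intro i
    rw [hw i]
    show (-yhat) ^ 2 - _ = _
    field_simp
    have e : yhat ^ 2 * r i ^ 2 = (s i + 1) * (s i - 1) := by linear_combination -(hs_sq i)
    rw [e, pow_two, mul_div_mul_left _ _ (hspne i), eq_div_iff (hspne i), sub_mul, div_mul_cancel₀ _ (hspne i)]
    ring
  have hsgt : ∀ i, |yhat * r i| < s i := by
    intro i
    nlinarith [hs_sq i, abs_nonneg (yhat * r i), sq_abs (yhat * r i), hs_nonneg i]
  refine ⟨?_, ?_, ?_⟩
  · intro i
    rw [hw i, abs_lt]
    constructor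
    · show -(-yhat) < _
      rw [lt_div_iff₀ (hsp i)]
      nlinarith [hsgt i, abs_le.mp (le_of_lt (hsgt i))]
    · show _ < -yhat
      rw [div_lt_iff₀ (hsp i)]
      nlinarith [hsgt i, abs_le.mp (le_of_lt (hsgt i))]
  · have hterm : ∀ i, 2 * u / (u ^ 2 - w i ^ 2) = -((s i + 1) / yhat) := by
      intro i
      rw [hdiff i]
      show 2 * -yhat / _ = _
      field_simp
    rw [Finset.sum_congr rfl (fun i _ => hterm i), Finset.sum_neg_distrib,
      ← Finset.sum_div, Finset.sum_add_distrib, Finset.sum_const, Finset.card_univ,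
      Fintype.card_fin, nsmul_eq_mul, mul_one]
    have hroot' : p * yhat + (∑ i, s i) + 1 = 0 := by
      rw [← hroot]
      congr 1
      congr 1
      apply Finset.sum_congr rfl
      intro i _
      simp only [hsdef]
      congr 1
      ring
    show -(((d : ℝ) - 1) / -yhat - -(((∑ i, s i) + d) / yhat)) = p
    rw [div_neg]
    field_simp
    linear_combination -hroot'
  · intro i
    rw [hdiff i, hw i]
    field_simp
    rw [mul_div_assoc, div_self (hspne i), mul_one]
end

section
/- Let d ≥ 1, α ∈ ℝ^d with α_i > 0 and ∑_i α_i = 1. For any y > 0 and p > 0, the function h'(y) = 2∑_i α_i²/(α_i y + (1+α_i)/p) - 2(y + 1/p)/(y(y + 2/p)) is strictly negative unless α is a vertex of the simplex, and in general h'(y) ≤ 0; i.e., 2∑_i α_i²/(α_i y + (1+α_i)/p) ≤ 2(y + 1/p)/(y(y + 2/p)). -/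
theorem stmt_6 (d : ℕ) (hd : 1 ≤ d) (α : Fin d → ℝ)
    (hα : ∀ i, 0 < α i) (hαsum : ∑ i, α i = 1)
    (y p : ℝ) (hy : 0 < y) (hp : 0 < p) :
    2 * ∑ i, (α i) ^ 2 / (α i * y + (1 + α i) / p) ≤ 2 * (y + 1 / p) / (y * (y + 2 / p)) ∧
    ((¬ ∃ i, α i = 1) →
      2 * ∑ i, (α i) ^ 2 / (α i * y + (1 + α i) / p) < 2 * (y + 1 / p) / (y * (y + 2 / p))) := by
  have hc : 0 < y + 2 / p := by positivity
  have hden : ∀ i, 0 < α i * y + (1 + α i) / p := by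
    intro i
    have := hα i
    positivity
  have hle1 : ∀ i, α i ≤ 1 := by
    intro i
    calc α i ≤ ∑ j, α j := Finset.single_le_sum (fun j _ => (hα j).le) (Finset.mem_univ i)
    _ = 1 := hαsum
  -- pointwise bound
  have hpt : ∀ i, (α i) ^ 2 / (α i * y + (1 + α i) / p) ≤ α i / (y + 2 / p) := by
    intro i
    rw [div_le_div_iff₀ (hden i) hc]
    have h1 : α i * (α i * y + (1 + α i)/p) - (α i)^2 * (y + 2/p) = α i * (1 - α i) / p := by
      field_simp; ring
    have h2 : 0 ≤ α i * (1 - α i) / p :=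
      div_nonneg (mul_nonneg (hα i).le (by linarith [hle1 i])) hp.le
    linarith
  have hsum : ∑ i, (α i) ^ 2 / (α i * y + (1 + α i) / p) ≤ 1 / (y + 2 / p) := by
    calc ∑ i, (α i) ^ 2 / (α i * y + (1 + α i) / p) ≤ ∑ i, α i / (y + 2/p) :=
      Finset.sum_le_sum (fun i _ => hpt i)
    _ = 1 / (y + 2/p) := by rw [← Finset.sum_div, hαsum]
  have htail : 1 / (y + 2 / p) ≤ (y + 1/p) / (y * (y + 2/p)) := by
    rw [div_le_div_iff₀ hc (by positivity)]
    have h2 : 0 ≤ (1/p) * (y + 2/p) := by positivity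
    nlinarith [h2]
  constructor
  · rw [mul_div_assoc]
    have := le_trans hsum htail
    linarith
  · intro hne
    push_neg at hne
    have hlt1 : ∀ i, α i < 1 := fun i => lt_of_le_of_ne (hle1 i) (hne i)
    have hptlt : ∀ i, (α i) ^ 2 / (α i * y + (1 + α i) / p) < α i / (y + 2 / p) := by
      intro i
      rw [div_lt_div_iff₀ (hden i) hc]
      have h1 : α i * (α i * y + (1 + α i)/p) - (α i)^2 * (y + 2/p) = α i * (1 - α i) / p := by
        field_simp; ring
      have h2 : 0 < α i * (1 - α i) / p :=
        div_pos (mul_pos (hα i) (by linarith [hlt1 i])) hp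
      linarith
    have hsumlt : ∑ i, (α i) ^ 2 / (α i * y + (1 + α i) / p) < 1 / (y + 2 / p) := by
      calc ∑ i, (α i) ^ 2 / (α i * y + (1 + α i) / p) < ∑ i, α i / (y + 2/p) := by
            apply Finset.sum_lt_sum_of_nonempty
            · exact Finset.univ_nonempty_iff.mpr (Fin.pos_iff_nonempty.mp hd)
            · exact fun i _ => hptlt i
      _ = 1 / (y + 2/p) := by rw [← Finset.sum_div, hαsum]
    rw [mul_div_assoc]
    have := lt_of_lt_of_le hsumlt htail
    linarith
end

section
/- Let d ≥ 1, α ∈ ℝ^d with α_i > 0 and ∑_i α_i = 1. For any y > 0 and p > 0, ∑_i α_i³/(α_i y + (1+α_i)/p)² ≤ 1/(y + 2/p)²; equivalently the second derivative h''(y) = -2∑_i α_i³/(α_i y + (1+α_i)/p)² + 2(y² + 2/p²)/(y²(y + 2/p)²) is strictly positive. -/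
theorem stmt_7 (d : ℕ) (hd : 1 ≤ d) (α : Fin d → ℝ)
    (hα : ∀ i, 0 < α i) (hαsum : ∑ i, α i = 1)
    (y p : ℝ) (hy : 0 < y) (hp : 0 < p) :
    (∑ i, (α i) ^ 3 / (α i * y + (1 + α i) / p) ^ 2 ≤ 1 / (y + 2 / p) ^ 2) ∧
    0 < -2 * ∑ i, (α i) ^ 3 / (α i * y + (1 + α i) / p) ^ 2
        + 2 * (y ^ 2 + 2 / p ^ 2) / (y ^ 2 * (y + 2 / p) ^ 2) := by
  have hyp : 0 < y + 2 / p := by positivity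
  have hmain : ∑ i, (α i) ^ 3 / (α i * y + (1 + α i) / p) ^ 2 ≤ 1 / (y + 2 / p) ^ 2 := by
    have hle : ∀ i, (α i) ^ 3 / (α i * y + (1 + α i) / p) ^ 2 ≤ α i / (y + 2 / p) ^ 2 := by
      intro i
      have hαi := hα i
      have hα1 : α i ≤ 1 := by
        rw [← hαsum]
        exact Finset.single_le_sum (fun j _ => (hα j).le) (Finset.mem_univ i)
      have hD : α i * (y + 2 / p) ≤ α i * y + (1 + α i) / p := by
        have : 2 * α i ≤ 1 + α i := by linarith
        rw [mul_add]
        have : α i * (2 / p) ≤ (1 + α i) / p := by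
          rw [show α i * (2 / p) = (2 * α i) / p by ring]
          gcongr
        linarith
      have hDpos : 0 < α i * (y + 2 / p) := by positivity
      calc (α i) ^ 3 / (α i * y + (1 + α i) / p) ^ 2
          ≤ (α i) ^ 3 / (α i * (y + 2 / p)) ^ 2 := by
            apply div_le_div_of_nonneg_left (by positivity) (by positivity)
            exact pow_le_pow_left₀ hDpos.le hD 2
        _ = α i / (y + 2 / p) ^ 2 := by
            field_simp
    calc ∑ i, (α i) ^ 3 / (α i * y + (1 + α i) / p) ^ 2
        ≤ ∑ i, α i / (y + 2 / p) ^ 2 := Finset.sum_le_sum fun i _ => hle i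
      _ = 1 / (y + 2 / p) ^ 2 := by rw [← Finset.sum_div, hαsum]
  refine ⟨hmain, ?_⟩
  have h2 : 2 / (y + 2 / p) ^ 2 < 2 * (y ^ 2 + 2 / p ^ 2) / (y ^ 2 * (y + 2 / p) ^ 2) := by
    rw [div_lt_div_iff₀ (by positivity) (by positivity)]
    have : 0 < 2 / p ^ 2 := by positivity
    nlinarith [mul_pos this (pow_pos hyp 2)]
  have h3 : 2 * ∑ i, (α i) ^ 3 / (α i * y + (1 + α i) / p) ^ 2 ≤ 2 / (y + 2 / p) ^ 2 := by
    rw [show (2:ℝ) / (y + 2 / p) ^ 2 = 2 * (1 / (y + 2 / p) ^ 2) by ring]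
    linarith
  linarith
end

section
/- Let d₂ ≥ 1, p > 0, r ∈ ℝ_{++}^{d₂}, φ(r) = ∏_i r_i^{2/d₂}, and suppose p² < d₂² φ(r) (interior dual radial geometric mean cone with equal powers). Then ŷ := -1/p + d₂(p + √(φ(r)(d₂² φ(r)/p² + d₂² - 1)))/(d₂² φ(r) - p²) is positive and satisfies φ(r)(2ŷ/p + ŷ²)(2ŷ/p)² = ((2/d₂)(2ŷ/p + ŷ²) + (1 - 1/d₂)(2ŷ/p))^{d₂·(2/d₂)}, i.e., it solves the equal-powers root equation h(ŷ) = 0. -/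
theorem stmt_8 (d₂ : ℕ) (hd : 1 ≤ d₂) (p : ℝ) (r : Fin d₂ → ℝ)
    (hp : 0 < p) (hr : ∀ i, 0 < r i)
    (hdual : p ^ 2 < (d₂ : ℝ) ^ 2 * ∏ i, (r i) ^ ((2 : ℝ) / d₂)) :
    let φ := ∏ i, (r i) ^ ((2 : ℝ) / d₂)
    let yhat := -1 / p +
      (d₂ : ℝ) * (p + Real.sqrt (φ * ((d₂ : ℝ) ^ 2 * φ / p ^ 2 + (d₂ : ℝ) ^ 2 - 1))) /
        ((d₂ : ℝ) ^ 2 * φ - p ^ 2)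
    0 < yhat ∧
    φ * (2 * yhat / p + yhat ^ 2) * (2 * yhat / p) ^ 2
      = ((2 / (d₂ : ℝ)) * (2 * yhat / p + yhat ^ 2)
          + (1 - 1 / (d₂ : ℝ)) * (2 * yhat / p)) ^ ((d₂ : ℝ) * (2 / (d₂ : ℝ))) := by
  intro φ yhat
  have hn : (1:ℝ) ≤ (d₂:ℝ) := by exact_mod_cast hd
  have hn0 : (0:ℝ) < (d₂:ℝ) := by linarith
  set n : ℝ := (d₂:ℝ) with hndef
  have hφ : 0 < φ := Finset.prod_pos (fun i _ => Real.rpow_pos_of_pos (hr i) _)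
  have hD : 0 < n^2*φ - p^2 := by dsimp only [φ] at *; linarith [hdual]
  have hpne : p ≠ 0 := ne_of_gt hp
  have hDne : n^2*φ - p^2 ≠ 0 := ne_of_gt hD
  have hnne : n ≠ 0 := ne_of_gt hn0
  have harg : 0 ≤ φ * (n^2*φ/p^2 + n^2 - 1) := by
    have h1 : (0:ℝ) ≤ n^2 - 1 := by nlinarith
    have h2 : 0 < n^2*φ/p^2 := by positivity
    nlinarith
  set S := Real.sqrt (φ * (n ^ 2 * φ / p ^ 2 + n ^ 2 - 1)) with hSdef
  have hS0 : 0 ≤ S := Real.sqrt_nonneg _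
  have hS2 : S^2 = φ * (n^2*φ/p^2 + n^2 - 1) := Real.sq_sqrt harg
  have hkey : p^2*S^2 - p^4 = (n^2*φ - p^2)*(φ + p^2) := by
    rw [hS2]; field_simp; ring
  have hy : yhat = -1/p + n*(p+S)/(n^2*φ - p^2) := rfl
  -- lower bound on S
  have hpS : n*φ ≤ p*S := by
    have h1 : (n*φ/p)^2 ≤ φ * (n^2*φ/p^2 + n^2 - 1) := by
      have h0 : (0:ℝ) ≤ (n^2-1)*φ := mul_nonneg (by nlinarith) hφ.le
      field_simp
      have h3 : (0:ℝ) ≤ (n^2-1)*p^2 := mul_nonneg (by nlinarith) (sq_nonneg p)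
      nlinarith [mul_nonneg h0 (pow_nonneg hp.le 4)]
    have h2 : n*φ/p ≤ S := by
      have := Real.sqrt_le_sqrt h1
      rwa [Real.sqrt_sq (by positivity)] at this
    calc n*φ = (n*φ/p)*p := by field_simp
    _ ≤ S*p := by apply mul_le_mul_of_nonneg_right h2 (le_of_lt hp)
    _ = p*S := mul_comm _ _
  have hw : yhat*((n^2*φ-p^2)*p) = n*p*(p+S) - (n^2*φ-p^2) := by
    rw [hy]; field_simp; ring
  clear_value yhat S n φ
  have hypos : 0 < yhat := by
    rw [hy]
    have h1 : 1/p < n*(p+S)/(n^2*φ-p^2) := by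
      rw [div_lt_div_iff₀ hp hD]
      nlinarith [mul_le_mul_of_nonneg_left hpS (le_of_lt hn0)]
    have h2 : -1/p = -(1/p) := by ring
    rw [h2]; linarith
  refine ⟨hypos, ?_⟩
  -- exponent equals 2
  have hexp : n * (2/n) = 2 := by field_simp
  rw [hexp, show (2:ℝ) = ((2:ℕ):ℝ) by norm_num, Real.rpow_natCast]
  push_cast
  -- quadratic in yhat
  have hquadP : n^2*φ*((n*p*(p+S) - (n^2*φ-p^2))^2 + 2*(n*p*(p+S) - (n^2*φ-p^2))*(n^2*φ-p^2))
      = (p*(n*p*(p+S) - (n^2*φ-p^2)) + (n+1)*((n^2*φ-p^2)*p))^2 := by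
    linear_combination (n^2*(n^2*φ - p^2)) * hkey
  have hquad : n^2*φ*(yhat^2 + 2*yhat/p) = (p*yhat + n + 1)^2 := by
    apply mul_right_cancel₀ (pow_ne_zero 2 (mul_ne_zero hDne hpne))
    have e1 : 2*yhat/p*((n^2*φ-p^2)*p)^2 = 2*(yhat*((n^2*φ-p^2)*p))*(n^2*φ-p^2) := by
      field_simp
    calc (n^2*φ*(yhat^2 + 2*yhat/p))*((n^2*φ-p^2)*p)^2
        = n^2*φ*((yhat*((n^2*φ-p^2)*p))^2 + 2*yhat/p*((n^2*φ-p^2)*p)^2) := by ring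
      _ = n^2*φ*((n*p*(p+S) - (n^2*φ-p^2))^2
            + 2*(n*p*(p+S) - (n^2*φ-p^2))*(n^2*φ-p^2)) := by rw [e1, hw]
      _ = (p*(n*p*(p+S) - (n^2*φ-p^2)) + (n+1)*((n^2*φ-p^2)*p))^2 := hquadP
      _ = (p*(yhat*((n^2*φ-p^2)*p)) + (n+1)*((n^2*φ-p^2)*p))^2 := by rw [hw]
      _ = (p*yhat + n + 1)^2*((n^2*φ-p^2)*p)^2 := by ring
  set t := 2*yhat/p with htdef
  have ht : t*p = 2*yhat := div_mul_cancel₀ _ hpne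
  have hR : (2/n)*(t+yhat^2) + (1-1/n)*t = (2*(t+yhat^2)+(n-1)*t)/n := by
    field_simp
  rw [hR, div_pow (2*(t+yhat^2)+(n-1)*t) n 2, eq_div_iff (pow_ne_zero 2 hnne)]
  linear_combination t^2 * hquad + (yhat*(p*yhat*t + 2*yhat^2 + 2*(n+1)*t)) * ht
end

section
/- Let d ≥ 1 and let f(u,v,w) = -log(v ∑_i log(w_i/v) - u) - log v - ∑_i log w_i on the interior of the logarithm cone {(u,v,w) : v > 0, w > 0, u < v ∑_i log(w_i/v)}. Given (p,q,r) with p < 0, r > 0, and q > p ∑_i log(-r_i/p) + pd, define ω̄ = d·ω((1/d)(1 + d - q/p + ∑_i log(-r_i/p)) - log d) where ω is the real Wright omega function, and set g*_p = (-d - 2 + q/p + 2ω̄)/(p(1 - ω̄)), g*_q = -1/(p(1 - ω̄)), g*_{r_i} = ω̄/(r_i(1 - ω̄)). Then (-g*_p, -g*_q, -g*_r) lies in the interior of the logarithm cone and the negative gradient of f there equals (p, q, r). -/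
theorem stmt_11 (d : ℕ) (hd : 1 ≤ d) (ω : ℝ → ℝ)
    (hωpos : ∀ β : ℝ, 0 < ω β) (hωeq : ∀ β : ℝ, ω β + Real.log (ω β) = β)
    (p q : ℝ) (r : Fin d → ℝ) (hp : p < 0) (hr : ∀ i, 0 < r i)
    (hq : p * ∑ i, Real.log (-(r i) / p) + p * d < q) :
    let ωb := (d : ℝ) * ω ((1 / d) * (1 + d - q / p + ∑ i, Real.log (-(r i) / p)) - Real.log d)
    let gp := (-(d : ℝ) - 2 + q / p + 2 * ωb) / (p * (1 - ωb))
    let gq := -1 / (p * (1 - ωb))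
    let gr : Fin d → ℝ := fun i => ωb / (r i * (1 - ωb))
    let u := -gp
    let v := -gq
    let w : Fin d → ℝ := fun i => -gr i
    let ζ := v * ∑ i, Real.log (w i / v) - u
    (0 < v ∧ (∀ i, 0 < w i) ∧ u < v * ∑ i, Real.log (w i / v)) ∧
    -(1 / ζ) = p ∧
    -(-(∑ i, Real.log (w i / v) - d) / ζ - 1 / v) = q ∧
    (∀ i, -(-v / (w i * ζ) - 1 / (w i)) = r i) := by
  intro ωb gp gq gr u v w ζ
  have hdR : (0:ℝ) < d := by exact_mod_cast hd
  have hp0 : p ≠ 0 := ne_of_lt hp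
  set S := ∑ i, Real.log (-(r i) / p) with hSdef
  set β := (1 / (d:ℝ)) * (1 + d - q / p + S) - Real.log d with hβdef
  set b := ω β with hbdef
  have hb0 : 0 < b := hωpos β
  have hbe : b + Real.log b = β := hωeq β
  have hωbdef : ωb = (d:ℝ) * b := rfl
  have hvdef : v = -(-1 / (p * (1 - ωb))) := rfl
  have hwdef : ∀ i, w i = -(ωb / (r i * (1 - ωb))) := fun i => rfl
  have hudef : u = -((-(d:ℝ) - 2 + q / p + 2 * ωb) / (p * (1 - ωb))) := rfl
  have hζdef : ζ = v * ∑ i, Real.log (w i / v) - u := rfl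
  clear_value gp gq gr u v w ζ ωb b β S
  have hqp : q / p < S + d := by
    rw [div_lt_iff_of_neg hp]
    nlinarith [hq]
  have hβgt : 1 / (d:ℝ) - Real.log d < β := by
    rw [hβdef]
    have h1 : (1:ℝ) < 1 + d - q/p + S := by nlinarith
    have h2 : (1/(d:ℝ)) * 1 < (1/(d:ℝ)) * (1 + d - q/p + S) :=
      (mul_lt_mul_iff_right₀ (by positivity)).mpr h1
    linarith
  have hbgt : 1 / (d:ℝ) < b := by
    by_contra h
    push_neg at h
    have hlb : Real.log b ≤ Real.log (1/(d:ℝ)) := Real.log_le_log hb0 h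
    rw [Real.log_div one_ne_zero (ne_of_gt hdR), Real.log_one] at hlb
    linarith
  have hW1 : 1 < ωb := by
    have h := (mul_lt_mul_iff_right₀ hdR).mpr hbgt
    rw [mul_one_div, div_self (ne_of_gt hdR)] at h
    rw [hωbdef]; linarith
  have hωbpos : 0 < ωb := by linarith
  have hpw : 0 < p * (1 - ωb) := mul_pos_of_neg_of_neg hp (by linarith)
  have hpw0 : p * (1 - ωb) ≠ 0 := ne_of_gt hpw
  have h1W : (1:ℝ) - ωb ≠ 0 := by intro h; nlinarith
  have hW1' : ωb - 1 ≠ 0 := sub_ne_zero.mpr (ne_of_gt hW1)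
  have hlog : (d:ℝ) * Real.log ωb = 1 + d - q/p + S - ωb := by
    rw [hωbdef, Real.log_mul (ne_of_gt hdR) (ne_of_gt hb0)]
    have hβ : (d:ℝ) * β = 1 + (d:ℝ) - q/p + S - (d:ℝ) * Real.log d := by
      rw [hβdef]; field_simp
    linear_combination (d:ℝ) * hbe + hβ
  have hv : v = 1/(p*(1-ωb)) := by rw [hvdef]; ring
  have hvpos : 0 < v := by rw [hv]; positivity
  have hw : ∀ i, w i = ωb/(r i * (ωb - 1)) := by
    intro i
    rw [hwdef i]
    have hri := (hr i).ne'
    field_simp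
    ring
  have hwpos : ∀ i, 0 < w i := by
    intro i
    rw [hw i]
    have : 0 < r i * (ωb - 1) := mul_pos (hr i) (by linarith)
    positivity
  have hu : u = ((d:ℝ) + 2 - q/p - 2*ωb)/(p*(1-ωb)) := by
    rw [hudef, ← neg_div]; ring_nf
  have hlogwv : ∀ i, Real.log (w i / v) = Real.log ωb - Real.log (-(r i)/p) := by
    intro i
    have hri := (hr i).ne'
    have hwv : w i / v = ωb * (-(r i)/p)⁻¹ := by
      rw [hw i, hv]
      field_simp
      ring
    have hrp : 0 < -(r i)/p := div_pos_of_neg_of_neg (by linarith [hr i]) hp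
    rw [hwv, Real.log_mul (ne_of_gt hωbpos) (by positivity), Real.log_inv]
    ring
  have hsum : ∑ i, Real.log (w i / v) = (d:ℝ) * Real.log ωb - S := by
    rw [hSdef]
    simp only [hlogwv, Finset.sum_sub_distrib, Finset.sum_const, Finset.card_univ,
      Fintype.card_fin, nsmul_eq_mul]
  have hζ : ζ = -1/p := by
    rw [hζdef, hsum, hlog, hv, hu]
    field_simp
    ring
  have hζpos : 0 < ζ := by
    rw [hζ, neg_div]
    have := one_div_neg.mpr hp
    linarith
  refine ⟨⟨hvpos, hwpos, ?_⟩, ?_, ?_, ?_⟩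
  · rw [hζdef] at hζpos; linarith
  · rw [hζ]; field_simp
  · rw [hsum, hlog, hζ, hv]
    field_simp
    ring
  · intro i
    have hri := (hr i).ne'
    have hwi := (hwpos i).ne'
    rw [hw i] at hwi ⊢
    rw [hζ, hv]
    field_simp
    ring
end

section
/- Let d ≥ 1, α ∈ ℝ^d with α_i > 0 and ∑ α_i = 1, φ(w) = ∏_i w_i^{α_i}. Let p < 0, r ∈ ℝ_{++}^d with -p < ∏_i (r_i/α_i)^{α_i}, and let ŷ > max_i(p α_i) satisfy ∑_i α_i log(ŷ - p α_i) = log φ(r). Define g*_p = -1/p - 1/ŷ and g*_{r_i} = (p α_i/ŷ - 1)/r_i. Then (-g*_p, -g*_r) lies in the interior of the hypograph power cone (i.e., -g*_r > 0 and -g*_p < φ(-g*_r)), φ(-g*_r) = 1/ŷ, and the negative gradient of the barrier f(u,w) = -log(φ(w) - u) - ∑_i log w_i at (-g*_p, -g*_r) equals (p, r). -/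
theorem stmt_12 (d : ℕ) (hd : 1 ≤ d) (α : Fin d → ℝ)
    (hα : ∀ i, 0 < α i) (hαsum : ∑ i, α i = 1)
    (p : ℝ) (r : Fin d → ℝ) (hp : p < 0) (hr : ∀ i, 0 < r i)
    (hdual : -p < ∏ i, (r i / α i) ^ (α i))
    (yhat : ℝ) (hymax : ∀ i, p * α i < yhat)
    (hroot : ∑ i, α i * Real.log (yhat - p * α i) = Real.log (∏ i, (r i) ^ (α i))) :
    let gp := -1 / p - 1 / yhat
    let gr : Fin d → ℝ := fun i => (p * α i / yhat - 1) / r i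
    let u := -gp
    let w : Fin d → ℝ := fun i => -gr i
    let φw := ∏ i, (w i) ^ (α i)
    (∀ i, 0 < w i) ∧ u < φw ∧ φw = 1 / yhat ∧
    -(1 / (φw - u)) = p ∧
    (∀ i, -(-φw * α i / (w i * (φw - u)) - 1 / (w i)) = r i) := by
  intro gp gr u w φw
  have hp' : 0 < -p := by linarith
  have hsub : ∀ i, 0 < yhat - p * α i := fun i => sub_pos.mpr (hymax i)
  have hlogφr : Real.log (∏ i, (r i) ^ (α i)) = ∑ i, α i * Real.log (r i) := by
    rw [Real.log_prod]
    · exact Finset.sum_congr rfl fun i _ => by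
        rw [Real.log_rpow (hr i)]
    · intro i _
      exact ne_of_gt (Real.rpow_pos_of_pos (hr i) _)
  -- yhat > 0
  have hy0 : 0 < yhat := by
    by_contra h
    push_neg at h
    have h1 : ∀ i, Real.log (yhat - p * α i) ≤ Real.log (-p) + Real.log (α i) := by
      intro i
      have : yhat - p * α i ≤ (-p) * α i := by nlinarith [hα i]
      calc Real.log (yhat - p * α i) ≤ Real.log ((-p) * α i) :=
            Real.log_le_log (hsub i) this
        _ = Real.log (-p) + Real.log (α i) := Real.log_mul (ne_of_gt hp') (ne_of_gt (hα i))
    have h2 : ∑ i, α i * Real.log (yhat - p * α i)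
        ≤ Real.log (-p) + ∑ i, α i * Real.log (α i) := by
      calc ∑ i, α i * Real.log (yhat - p * α i)
          ≤ ∑ i, α i * (Real.log (-p) + Real.log (α i)) :=
            Finset.sum_le_sum fun i _ => mul_le_mul_of_nonneg_left (h1 i) (le_of_lt (hα i))
        _ = (∑ i, α i) * Real.log (-p) + ∑ i, α i * Real.log (α i) := by
            rw [Finset.sum_mul]
            rw [← Finset.sum_add_distrib]
            exact Finset.sum_congr rfl fun i _ => by ring
        _ = Real.log (-p) + ∑ i, α i * Real.log (α i) := by rw [hαsum, one_mul]
    have h3 : Real.log (-p) < ∑ i, α i * (Real.log (r i) - Real.log (α i)) := by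
      have hposprod : 0 < ∏ i, (r i / α i) ^ (α i) :=
        Finset.prod_pos fun i _ => Real.rpow_pos_of_pos (div_pos (hr i) (hα i)) _
      have := Real.log_lt_log hp' hdual
      rwa [Real.log_prod (fun i _ => ne_of_gt (Real.rpow_pos_of_pos (div_pos (hr i) (hα i)) _)),
        Finset.sum_congr rfl (fun i _ => by
          rw [Real.log_rpow (div_pos (hr i) (hα i)),
            Real.log_div (ne_of_gt (hr i)) (ne_of_gt (hα i))])] at this
    have h4 : ∑ i, α i * (Real.log (r i) - Real.log (α i))
        = ∑ i, α i * Real.log (r i) - ∑ i, α i * Real.log (α i) := by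
      rw [← Finset.sum_sub_distrib]
      exact Finset.sum_congr rfl fun i _ => by ring
    rw [hroot, hlogφr] at *
    linarith [h2, h3, h4.symm ▸ h3]
  have hyne : yhat ≠ 0 := ne_of_gt hy0
  have hwi : ∀ i, w i = (yhat - p * α i) / (yhat * r i) := by
    intro i
    show -((p * α i / yhat - 1) / r i) = _
    field_simp
    ring
  have hwpos : ∀ i, 0 < w i := by
    intro i
    rw [hwi i]
    exact div_pos (hsub i) (mul_pos hy0 (hr i))
  have hφwpos : 0 < φw := Finset.prod_pos fun i _ => Real.rpow_pos_of_pos (hwpos i) _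
  have hlogφw : Real.log φw = -Real.log yhat := by
    have : Real.log φw = ∑ i, α i * Real.log (w i) := by
      rw [Real.log_prod (fun i _ => ne_of_gt (Real.rpow_pos_of_pos (hwpos i) _))]
      exact Finset.sum_congr rfl fun i _ => by rw [Real.log_rpow (hwpos i)]
    rw [this]
    have hlw : ∀ i, Real.log (w i) = Real.log (yhat - p * α i) - Real.log yhat - Real.log (r i) := by
      intro i
      rw [hwi i, Real.log_div (ne_of_gt (hsub i)) (ne_of_gt (mul_pos hy0 (hr i))),
        Real.log_mul hyne (ne_of_gt (hr i))]
      ring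
    calc ∑ i, α i * Real.log (w i)
        = ∑ i, (α i * Real.log (yhat - p * α i) - α i * Real.log yhat - α i * Real.log (r i)) := by
          exact Finset.sum_congr rfl fun i _ => by rw [hlw i]; ring
      _ = (∑ i, α i * Real.log (yhat - p * α i)) - (∑ i, α i) * Real.log yhat
            - ∑ i, α i * Real.log (r i) := by
          rw [Finset.sum_sub_distrib, Finset.sum_sub_distrib, Finset.sum_mul]
      _ = -Real.log yhat := by rw [hroot, hlogφr, hαsum]; ring
  have hφw : φw = 1 / yhat := by
    have := congrArg Real.exp hlogφw
    rw [Real.exp_log hφwpos, Real.exp_neg, Real.exp_log hy0] at this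
    rw [this, one_div]
  have hu : u = 1 / p + 1 / yhat := by
    show -(-1 / p - 1 / yhat) = _
    ring
  have hsu : φw - u = -1 / p := by
    rw [hφw, hu]
    ring
  refine ⟨hwpos, ?_, hφw, ?_, ?_⟩
  · have : 0 < φw - u := by
      rw [hsu, show (-1:ℝ)/p = 1/(-p) by ring]
      exact div_pos one_pos hp'
    linarith
  · rw [hsu]
    field_simp
  · intro i
    rw [hsu, hφw, hwi i]
    have h1 : yhat - p * α i ≠ 0 := ne_of_gt (hsub i)
    have h2 : r i ≠ 0 := ne_of_gt (hr i)
    have h3 : p ≠ 0 := ne_of_lt hp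
    have h4 : yhat * α i * p - yhat ^ 2 ≠ 0 := ne_of_lt (by nlinarith [hsub i])
    field_simp
    have h5 : p * α i - yhat ≠ 0 := ne_of_lt (by linarith [hsub i])
    have h6 : -(α i * p) + yhat ≠ 0 := by linarith [hsub i]
    ring_nf
    field_simp
end

section
/- Let d ≥ 1, α ∈ ℝ^d with α_i > 0 and ∑ α_i = 1, and φ(w) = ∏_i w_i^{α_i}. If g*_{r_i} = (p α_i μ - 1)/r_i for all i where μ = φ(-g*_r), p < 0, r > 0, then φ(r) = ∏_i (-p α_i + μ^{-1})^{α_i}; i.e., μ^{-1} is the unique root of y ↦ ∑_i α_i log(y - p α_i) - log φ(r). -/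
theorem stmt_13 (d : ℕ) (hd : 1 ≤ d) (α : Fin d → ℝ)
    (hα : ∀ i, 0 < α i) (hαsum : ∑ i, α i = 1)
    (p : ℝ) (r : Fin d → ℝ) (hp : p < 0) (hr : ∀ i, 0 < r i)
    (v : Fin d → ℝ) (hv : ∀ i, 0 < v i)
    (μ : ℝ) (hμ : μ = ∏ i, (v i) ^ (α i))
    (hg : ∀ i, -(v i) = (p * α i * μ - 1) / r i) :
    (∏ i, (r i) ^ (α i)) = (∏ i, (-p * α i + μ⁻¹) ^ (α i)) ∧
    (∑ i, α i * Real.log (μ⁻¹ - p * α i) - Real.log (∏ i, (r i) ^ (α i)) = 0) ∧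
    ∀ y : ℝ, (∀ i, p * α i < y) →
      ∑ i, α i * Real.log (y - p * α i) - Real.log (∏ i, (r i) ^ (α i)) = 0 → y = μ⁻¹ := by
  have hμpos : 0 < μ := by
    rw [hμ]; exact Finset.prod_pos fun i _ => Real.rpow_pos_of_pos (hv i) _
  have hkey : ∀ i, r i * v i = 1 - p * α i * μ := by
    intro i
    have h := hg i
    rw [eq_div_iff (hr i).ne'] at h
    linear_combination -h
  have hquot : ∀ i, -p * α i + μ⁻¹ = r i * v i * μ⁻¹ := by
    intro i
    rw [hkey i]
    field_simp
    ring
  have hμroot : ∑ i, α i * Real.log (μ⁻¹ - p * α i) - Real.log (∏ i, (r i) ^ (α i)) = 0 := by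
    have hlog : ∀ i, Real.log (μ⁻¹ - p * α i) = Real.log (r i) + Real.log (v i) - Real.log μ := by
      intro i
      have h : μ⁻¹ - p * α i = r i * v i * μ⁻¹ := by rw [← hquot i]; ring
      rw [h, Real.log_mul (mul_pos (hr i) (hv i)).ne' (inv_pos.mpr hμpos).ne',
        Real.log_mul (hr i).ne' (hv i).ne', Real.log_inv]
      ring
    have hlogμ : Real.log μ = ∑ i, α i * Real.log (v i) := by
      rw [hμ, Real.log_prod (fun i _ => (Real.rpow_pos_of_pos (hv i) _).ne')]
      exact Finset.sum_congr rfl fun i _ => by rw [Real.log_rpow (hv i)]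
    have hlogr : Real.log (∏ i, (r i) ^ (α i)) = ∑ i, α i * Real.log (r i) := by
      rw [Real.log_prod (fun i _ => (Real.rpow_pos_of_pos (hr i) _).ne')]
      exact Finset.sum_congr rfl fun i _ => by rw [Real.log_rpow (hr i)]
    rw [hlogr, Finset.sum_congr rfl fun i _ => by rw [hlog i]]
    have h2 : ∑ i, α i * (Real.log (r i) + Real.log (v i) - Real.log μ)
        = ∑ i, α i * Real.log (r i) + ∑ i, α i * Real.log (v i) - (∑ i, α i) * Real.log μ := by
      rw [Finset.sum_mul, ← Finset.sum_add_distrib, ← Finset.sum_sub_distrib]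
      exact Finset.sum_congr rfl fun i _ => by ring
    rw [h2, hαsum, hlogμ]
    ring
  refine ⟨?_, hμroot, ?_⟩
  · have h : ∀ i, (-p * α i + μ⁻¹) ^ (α i) = (r i) ^ (α i) * (v i) ^ (α i) * (μ⁻¹) ^ (α i) := by
      intro i
      rw [hquot i, Real.mul_rpow (mul_nonneg (hr i).le (hv i).le) (inv_pos.mpr hμpos).le,
        Real.mul_rpow (hr i).le (hv i).le]
    rw [Finset.prod_congr rfl fun i _ => h i, Finset.prod_mul_distrib,
      Finset.prod_mul_distrib, ← hμ, ← Real.rpow_sum_of_pos (inv_pos.mpr hμpos) α Finset.univ,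
      hαsum, Real.rpow_one]
    field_simp
  · intro y hy hroot
    have hμinv : ∀ i, p * α i < μ⁻¹ := by
      intro i
      have h1 : μ⁻¹ - p * α i = r i * v i * μ⁻¹ := by rw [← hquot i]; ring
      nlinarith [mul_pos (mul_pos (hr i) (hv i)) (inv_pos.mpr hμpos)]
    by_contra hne
    haveI : Nonempty (Fin d) := Fin.pos_iff_nonempty.mp hd
    have hmono : ∀ y₁ y₂ : ℝ, y₁ < y₂ → (∀ i, p * α i < y₁) →
        ∑ i, α i * Real.log (y₁ - p * α i) < ∑ i, α i * Real.log (y₂ - p * α i) := by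
      intro y₁ y₂ h12 h1
      refine Finset.sum_lt_sum_of_nonempty Finset.univ_nonempty fun i _ => ?_
      exact mul_lt_mul_of_pos_left
        (Real.log_lt_log (by linarith [h1 i]) (by linarith)) (hα i)
    rcases lt_trichotomy y μ⁻¹ with h | h | h
    · have := hmono y μ⁻¹ h hy; linarith
    · exact hne h
    · have := hmono μ⁻¹ y h hμinv; linarith
end

section
/- Let d ≥ 1 and (u,w) ∈ ℝ × ℝ^d with u > ‖w‖_∞, and let (p, r) = -g(u,w) where g is the gradient of f(u,w) = -∑_i log(u² - w_i²) + (d-1) log u. Then p > ‖r‖_1, i.e., the negative gradient maps the interior of the infinity norm cone into the interior of the epigraph of the ℓ1 norm. -/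
theorem stmt_14 (d : ℕ) (hd : 1 ≤ d) (u : ℝ) (w : Fin d → ℝ)
    (hint : ∀ i, |w i| < u) :
    let p := -(((d : ℝ) - 1) / u - ∑ i, 2 * u / (u ^ 2 - (w i) ^ 2))
    let r : Fin d → ℝ := fun i => -(2 * w i / (u ^ 2 - (w i) ^ 2))
    ∑ i, |r i| < p := by
  intro p r
  have hu : 0 < u := lt_of_le_of_lt (abs_nonneg (w ⟨0, hd⟩)) (hint ⟨0, hd⟩)
  have hD : ∀ i, 0 < u ^ 2 - w i ^ 2 := by
    intro i
    nlinarith [abs_nonneg (w i), hint i, sq_abs (w i)]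
  have key : ∀ i, |r i| + 1 / u ≤ 2 * u / (u ^ 2 - w i ^ 2) := by
    intro i
    have hDi := hD i
    have h1 : |r i| = 2 * |w i| / (u ^ 2 - w i ^ 2) := by
      simp [r, abs_div, abs_of_pos hDi, abs_mul]
    rw [h1, div_add_div _ _ (ne_of_gt hDi) (ne_of_gt hu),
      div_le_div_iff₀ (by positivity) hDi]
    nlinarith [mul_nonneg hDi.le (sq_nonneg (u - |w i|)), sq_abs (w i),
      abs_nonneg (w i)]
  have h2 : (∑ i, |r i|) + (d : ℝ) * (1 / u) ≤ ∑ i, 2 * u / (u ^ 2 - w i ^ 2) := by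
    have := Finset.sum_le_sum (fun i (_ : i ∈ Finset.univ) => key i)
    simpa [Finset.sum_add_distrib] using this
  have h3 : ((d : ℝ) - 1) / u < (d : ℝ) / u :=
    (div_lt_div_iff_of_pos_right hu).mpr (by linarith)
  show ∑ i, |r i| < -(((d : ℝ) - 1) / u - ∑ i, 2 * u / (u ^ 2 - (w i) ^ 2))
  have hdu : (d : ℝ) * (1 / u) = (d : ℝ) / u := by ring
  linarith [h2, h3]
end

section
/- Let d ≥ 1, v > 0, w ∈ ℝ_{++}^d, u < v ∑_i log(w_i/v), and ζ = v ∑_i log(w_i/v) - u. Define p = -1/ζ, q = (∑_i log(w_i/v) - d)/ζ + 1/v, r_i = v/(w_i ζ) + 1/w_i. Then p < 0, r > 0, and q > p ∑_i log(-r_i/p) + p d; i.e., the negative gradient of the logarithm cone barrier maps the cone's interior into the interior of the dual cone. -/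
theorem aux15 (d : ℕ) (hd : 1 ≤ d) (u v : ℝ) (w : Fin d → ℝ)
    (hv : 0 < v) (hw : ∀ i, 0 < w i)
    (hu : u < v * ∑ i, Real.log (w i / v)) (ζ : ℝ)
    (hζdef : ζ = v * ∑ i, Real.log (w i / v) - u) :
    -1 / ζ < 0 ∧ (∀ i, 0 < v / (w i * ζ) + 1 / (w i)) ∧
      (-1 / ζ) * ∑ i, Real.log (-(v / (w i * ζ) + 1 / (w i)) / (-1 / ζ)) + (-1 / ζ) * d
        < (∑ i, Real.log (w i / v) - d) / ζ + 1 / v := by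
  have hζ : 0 < ζ := by rw [hζdef]; linarith
  have hp : -1 / ζ < 0 := div_neg_of_neg_of_pos (by norm_num) hζ
  have hr : ∀ i, 0 < v / (w i * ζ) + 1 / (w i) := fun i =>
    add_pos (div_pos hv (mul_pos (hw i) hζ)) (one_div_pos.mpr (hw i))
  refine ⟨hp, hr, ?_⟩
  have hlog : ∀ i : Fin d, Real.log (-(v / (w i * ζ) + 1 / (w i)) / (-1 / ζ))
      = Real.log (v + ζ) - Real.log (w i) := by
    intro i
    have h1 : -(v / (w i * ζ) + 1 / (w i)) / (-1 / ζ) = (v + ζ) / w i := by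
      have hwi : w i ≠ 0 := (hw i).ne'
      have hζ' : ζ ≠ 0 := hζ.ne'
      field_simp
    rw [h1, Real.log_div (by linarith) (ne_of_gt (hw i))]
  have hsum : ∑ i, Real.log (-(v / (w i * ζ) + 1 / (w i)) / (-1 / ζ))
      = d * Real.log (v + ζ) - ∑ i, Real.log (w i) := by
    simp only [hlog]
    rw [Finset.sum_sub_distrib, Finset.sum_const, Finset.card_univ, Fintype.card_fin,
      nsmul_eq_mul]
  have hSval : ∑ i, Real.log (w i / v) = (∑ i, Real.log (w i)) - d * Real.log v := by
    have : ∀ i : Fin d, Real.log (w i / v) = Real.log (w i) - Real.log v := fun i =>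
      Real.log_div (ne_of_gt (hw i)) (ne_of_gt hv)
    simp only [this]
    rw [Finset.sum_sub_distrib, Finset.sum_const, Finset.card_univ, Fintype.card_fin,
      nsmul_eq_mul]
  have key : ((∑ i, Real.log (w i / v) - d) / ζ + 1 / v)
      - ((-1 / ζ) * (d * Real.log (v + ζ) - ∑ i, Real.log (w i)) + (-1 / ζ) * d)
      = d * (Real.log (v + ζ) - Real.log v) / ζ + 1 / v := by
    rw [hSval]
    field_simp
    ring
  have hlogv : Real.log v < Real.log (v + ζ) := Real.log_lt_log hv (by linarith)
  have hd' : (0 : ℝ) < d := by exact_mod_cast Nat.lt_of_lt_of_le Nat.zero_lt_one hd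
  have hpos : 0 < d * (Real.log (v + ζ) - Real.log v) / ζ + 1 / v :=
    add_pos (div_pos (mul_pos hd' (sub_pos.mpr hlogv)) hζ) (one_div_pos.mpr hv)
  rw [hsum]
  linarith [key, hpos]

theorem stmt_15 (d : ℕ) (hd : 1 ≤ d) (u v : ℝ) (w : Fin d → ℝ)
    (hv : 0 < v) (hw : ∀ i, 0 < w i)
    (hu : u < v * ∑ i, Real.log (w i / v)) :
    let ζ := v * ∑ i, Real.log (w i / v) - u
    let p := -1 / ζ
    let q := (∑ i, Real.log (w i / v) - d) / ζ + 1 / v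
    let r : Fin d → ℝ := fun i => v / (w i * ζ) + 1 / (w i)
    p < 0 ∧ (∀ i, 0 < r i) ∧ p * ∑ i, Real.log (-(r i) / p) + p * d < q := by
  intro ζ p q r
  exact aux15 d hd u v w hv hw hu ζ rfl
end
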